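/- Under the stated hypotheses, the twisted Long–Moody matrices satisfy the Artin relation for j ∉ {i, i+1}: S_i G_j = G_j S_i for all 1 ≤ i ≤ n−1 and 1 ≤ j ≤ n with j ≠ i and j ≠ i+1. -/
import Mathlib


open Matrix

namespace KLM

variable {k : Type*} [Field k]

/-- Assemble an `Nn × Nn` matrix from an `n × n` array of `N × N` blocks,
blocks being indexed by natural numbers (only indices `< n` are relevant). -/
def blk (n N : ℕ) (B : ℕ → ℕ → Matrix (Fin N) (Fin N) k) :
    Matrix (Fin n × Fin N) (Fin n × Fin N) k :=
  Matrix.of fun p q => B p.1.1 q.1.1 p.2 q.2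

/-- The Dettweiler–Reiter convolution matrix `G_j = ρ^{DR}_λ(x_j)` (0-based index `j`):
the identity except that the `j`-th block row is
`(λ(g_0−1), …, λ(g_{j−1}−1), λ g_j, g_{j+1}−1, …, g_{n−1}−1)`. -/
def G (n N : ℕ) (g : ℕ → Matrix (Fin N) (Fin N) k) (lam : k) (j : ℕ) :
    Matrix (Fin n × Fin N) (Fin n × Fin N) k :=
  blk n N fun r c =>
    if r = j then
      (if c < j then lam • (g c - 1) else if c = j then lam • g j else g c - 1)
    else if r = c then 1 else 0

/-- The Long–Moody matrix `S_i = ρ^{LM}(σ_i)` (0-based index `i`):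
`(s_i ⊕ ⋯ ⊕ s_i) · diag(1, …, 1, R_i, 1, …, 1)` where `R_i` is the
`2×2` block matrix with rows `(0, g_i)` and `(1, 1 − g_{i+1})`
placed in block rows/columns `i, i+1`. -/
def S (n N : ℕ) (g s : ℕ → Matrix (Fin N) (Fin N) k) (i : ℕ) :
    Matrix (Fin n × Fin N) (Fin n × Fin N) k :=
  blk n N fun r c =>
    if r = i ∧ c = i then 0
    else if r = i ∧ c = i + 1 then s i * g i
    else if r = i + 1 ∧ c = i then s i
    else if r = i + 1 ∧ c = i + 1 then s i * (1 - g (i + 1))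
    else if r = c then s i
    else 0

set_option linter.unusedSectionVars false

section Aux
variable {N : ℕ}

def SB (g s : ℕ → Matrix (Fin N) (Fin N) k) (i : ℕ) : ℕ → ℕ → Matrix (Fin N) (Fin N) k :=
  fun r c =>
    if r = i ∧ c = i then 0
    else if r = i ∧ c = i + 1 then s i * g i
    else if r = i + 1 ∧ c = i then s i
    else if r = i + 1 ∧ c = i + 1 then s i * (1 - g (i + 1))
    else if r = c then s i
    else 0

def GB (g : ℕ → Matrix (Fin N) (Fin N) k) (lam : k) (j : ℕ) :
    ℕ → ℕ → Matrix (Fin N) (Fin N) k :=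
  fun r c =>
    if r = j then
      (if c < j then lam • (g c - 1) else if c = j then lam • g j else g c - 1)
    else if r = c then 1 else 0

variable (g s : ℕ → Matrix (Fin N) (Fin N) k) (lam : k) (i j : ℕ)

lemma SB_row_i (c : ℕ) : SB g s i i c = if c = i + 1 then s i * g i else 0 := by
  unfold SB; split_ifs <;> first | rfl | omega

lemma SB_row_i1 (c : ℕ) :
    SB g s i (i + 1) c = if c = i then s i else if c = i + 1 then s i * (1 - g (i + 1)) else 0 := by
  unfold SB; split_ifs <;> first | rfl | omega

lemma SB_row_other {a : ℕ} (ha : a ≠ i) (ha1 : a ≠ i + 1) (c : ℕ) :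
    SB g s i a c = if c = a then s i else 0 := by
  unfold SB; split_ifs <;> first | rfl | omega

lemma SB_col_i (r : ℕ) : SB g s i r i = if r = i + 1 then s i else 0 := by
  unfold SB; split_ifs <;> first | rfl | omega

lemma SB_col_i1 (r : ℕ) :
    SB g s i r (i + 1) = if r = i then s i * g i else if r = i + 1 then s i * (1 - g (i + 1)) else 0 := by
  unfold SB; split_ifs <;> first | rfl | omega

lemma SB_col_other {b : ℕ} (hb : b ≠ i) (hb1 : b ≠ i + 1) (r : ℕ) :
    SB g s i r b = if r = b then s i else 0 := by
  unfold SB; split_ifs <;> first | rfl | omega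

lemma GB_row_other {a : ℕ} (ha : a ≠ j) (c : ℕ) :
    GB g lam j a c = if c = a then 1 else 0 := by
  unfold GB; split_ifs <;> first | rfl | omega

end Aux

lemma blk_mul (n N : ℕ) (B C : ℕ → ℕ → Matrix (Fin N) (Fin N) k) :
    blk n N B * blk n N C = blk n N fun a b => ∑ m ∈ Finset.range n, B a m * C m b := by
  ext ⟨a, x⟩ ⟨b, y⟩
  simp only [blk, Matrix.mul_apply, of_apply, Fintype.sum_prod_type, Matrix.sum_apply]
  exact Fin.sum_univ_eq_sum_range (fun m => ∑ z, B a.1 m x z * C m b.1 z y) n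

lemma blk_congr {n N : ℕ} {B C : ℕ → ℕ → Matrix (Fin N) (Fin N) k}
    (h : ∀ a b, a < n → b < n → B a b = C a b) : blk n N B = blk n N C := by
  ext ⟨a, x⟩ ⟨b, y⟩
  simp only [blk, of_apply]
  rw [h _ _ a.isLt b.isLt]

lemma sum_ite_one {V : Type*} [AddCommMonoid V] {n t : ℕ} (ht : t < n) (f : ℕ → V) :
    ∑ m ∈ Finset.range n, (if m = t then f m else 0) = f t := by
  simp [Finset.sum_ite_eq', ht]

lemma sum_ite_pair {V : Type*} [AddCommMonoid V] {n t u : ℕ} (ht : t < n) (hu : u < n)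
    (htu : t ≠ u) (f f' : ℕ → V) :
    ∑ m ∈ Finset.range n, (if m = t then f m else if m = u then f' m else 0)
      = f t + f' u := by
  have h : ∀ m, (if m = t then f m else if m = u then f' m else 0)
      = (if m = t then f m else 0) + (if m = u then f' m else 0) := by
    intro m; split_ifs with h1 h2 <;> simp_all
  simp only [h, Finset.sum_add_distrib, sum_ite_one ht, sum_ite_one hu]

-- key noncommutative identity
lemma key2 {N : ℕ} (gi gi1 si : Matrix (Fin N) (Fin N) k)
    (e1 : si * gi = gi1 * si) (e2 : gi1 * si * gi1 = gi * gi1 * si) :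
    si * (gi1 - 1) = (gi - 1) * (si * gi) + (gi1 - 1) * (si * (1 - gi1)) := by
  have e2' : gi1 * (si * gi1) = gi * (gi1 * si) := by
    rw [← mul_assoc, e2, mul_assoc]
  have h1 : (gi - 1) * (si * gi) = gi * (gi1 * si) - gi1 * si := by
    rw [← e1]; noncomm_ring
  have h2 : (gi1 - 1) * (si * (1 - gi1)) = gi1 * si - gi * (gi1 * si) - si + si * gi1 := by
    rw [← e2']; noncomm_ring
  rw [h1, h2]; noncomm_ring



lemma GB_row_j {N : ℕ} (g : ℕ → Matrix (Fin N) (Fin N) k) (lam : k) (j c : ℕ) :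
    GB g lam j j c = if c < j then lam • (g c - 1) else if c = j then lam • g j else g c - 1 := by
  simp [GB]

/-- Artin relation for `j ∉ {i, i+1}`: `S_i G_j = G_j S_i`. -/
theorem twistedLM_artin_other
    (N n : ℕ) (hN : 1 ≤ N) (hn : 2 ≤ n)
    (g s : ℕ → Matrix (Fin N) (Fin N) k) (lam : k) (hlam : lam ≠ 0)
    (hgu : ∀ j, j < n → IsUnit (g j))
    (hsu : ∀ i, i + 1 < n → IsUnit (s i))
    (hbr1 : ∀ i, i + 2 < n → s i * s (i + 1) * s i = s (i + 1) * s i * s (i + 1))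
    (hbr2 : ∀ i j, i + 1 < n → j + 1 < n → (i + 2 ≤ j ∨ j + 2 ≤ i) →
      s i * s j = s j * s i)
    (ha1 : ∀ i, i + 1 < n → s i * g i = g (i + 1) * s i)
    (ha2 : ∀ i, i + 1 < n → g (i + 1) * s i * g (i + 1) = g i * g (i + 1) * s i)
    (ha3 : ∀ i j, i + 1 < n → j < n → j ≠ i → j ≠ i + 1 → s i * g j = g j * s i) :
    ∀ i j, i + 1 < n → j < n → j ≠ i → j ≠ i + 1 →
      S n N g s i * G n N g lam j = G n N g lam j * S n N g s i := by
  intro i j hi hj hji hji1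
  have hi' : i < n := by omega
  have hii : i ≠ i + 1 := by omega
  have hij : i ≠ j := fun h => hji h.symm
  have hij1 : i + 1 ≠ j := fun h => hji1 h.symm
  have e1 : s i * g i = g (i + 1) * s i := ha1 i hi
  have comm1 : s i * (g i - 1) = (g (i + 1) - 1) * s i := by
    rw [mul_sub, sub_mul, e1, mul_one, one_mul]
  have comm1s : s i * (lam • (g i - 1)) = (lam • (g (i + 1) - 1)) * s i := by
    rw [mul_smul_comm, smul_mul_assoc, comm1]
  have plain2 : s i * (g (i + 1) - 1)
      = (g i - 1) * (s i * g i) + (g (i + 1) - 1) * (s i * (1 - g (i + 1))) :=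
    key2 (g i) (g (i + 1)) (s i) e1 (ha2 i hi)
  have smul2 : s i * (lam • (g (i + 1) - 1))
      = (lam • (g i - 1)) * (s i * g i) + (lam • (g (i + 1) - 1)) * (s i * (1 - g (i + 1))) := by
    rw [mul_smul_comm, smul_mul_assoc, smul_mul_assoc, ← smul_add, plain2]
  have hS : S n N g s i = blk n N (SB g s i) := rfl
  have hG : G n N g lam j = blk n N (GB g lam j) := rfl
  rw [hS, hG, blk_mul, blk_mul]
  apply blk_congr
  intro a b ha hb
  by_cases hai : a = i
  · rw [hai]
    simp only [SB_row_i, ite_mul, zero_mul]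
    rw [sum_ite_one hi (fun m => s i * g i * GB g lam j m b)]
    simp only [GB_row_other g lam j hij, GB_row_other g lam j hij1, ite_mul, one_mul,
      zero_mul, mul_ite, mul_one, mul_zero]
    rw [sum_ite_one hi' (fun m => SB g s i m b)]
    rw [SB_row_i]
    try (split_ifs <;> first | rfl | (exfalso; omega))
  by_cases hai1 : a = i + 1
  · rw [hai1]
    simp only [SB_row_i1, ite_mul, zero_mul]
    rw [sum_ite_pair hi' hi hii (fun m => s i * GB g lam j m b)
      (fun m => s i * (1 - g (i + 1)) * GB g lam j m b)]
    simp only [GB_row_other g lam j hij, GB_row_other g lam j hij1, mul_ite, mul_one,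
      mul_zero, ite_mul, one_mul, zero_mul]
    rw [sum_ite_one hi (fun m => SB g s i m b)]
    rw [SB_row_i1]
    split_ifs <;> first | (exfalso; omega) | rfl | simp
  by_cases haj : a = j
  · rw [haj]
    simp only [SB_row_other g s i hji hji1, ite_mul, zero_mul]
    rw [sum_ite_one hj (fun m => s i * GB g lam j m b)]
    by_cases hbi : b = i
    · rw [hbi]
      simp only [SB_col_i, mul_ite, mul_zero]
      rw [sum_ite_one hi (fun m => GB g lam j j m * s i)]
      rw [GB_row_j, GB_row_j]
      split_ifs <;> first | exact comm1s | exact comm1 | (exfalso; omega)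
    by_cases hbi1 : b = i + 1
    · rw [hbi1]
      simp only [SB_col_i1, mul_ite, mul_zero]
      rw [sum_ite_pair hi' hi hii (fun m => GB g lam j j m * (s i * g i))
        (fun m => GB g lam j j m * (s i * (1 - g (i + 1))))]
      simp only [GB_row_j]
      split_ifs <;> first | exact smul2 | exact plain2 | (exfalso; omega)
    · have comm := ha3 i b hi hb hbi hbi1
      have plainc : s i * (g b - 1) = (g b - 1) * s i := by
        rw [mul_sub, sub_mul, comm, mul_one, one_mul]
      simp only [SB_col_other g s i hbi hbi1, mul_ite, mul_zero]
      rw [sum_ite_one hb (fun m => GB g lam j j m * s i)]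
      simp only [GB_row_j]
      split_ifs with h1 h2
      · rw [mul_smul_comm, smul_mul_assoc, plainc]
      · rw [mul_smul_comm, smul_mul_assoc, show s i * g j = g j * s i by rw [← h2]; exact comm]
      · exact plainc
  · simp only [SB_row_other g s i hai hai1, ite_mul, zero_mul]
    rw [sum_ite_one ha (fun m => s i * GB g lam j m b)]
    simp only [GB_row_other g lam j haj, mul_ite, mul_one, mul_zero, ite_mul, one_mul, zero_mul]
    rw [sum_ite_one ha (fun m => SB g s i m b)]
    rw [SB_row_other g s i hai hai1]
    try (split_ifs <;> first | rfl | (exfalso; omega))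


end KLM
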